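/- Let f : ℝ^d → ℝ be continuously differentiable with L-Lipschitz gradient for some L > 0, let R = [a₁,b₁] × ⋯ × [a_d,b_d] be a full-dimensional hyperrectangle in ℝ^d, let x ∈ R and let ε > 0. If every point y in the topological boundary ∂R is (ε/2)-unreachable from x, and max_i (b_i − a_i) ≤ ε/(2·√d·L), then x is an ε-stationary point of f, i.e. ‖∇f(x)‖ ≤ ε. -/

import Mathlib

open InnerProductSpace RealInnerProductSpace

theorem stmt_12 (d : ℕ) (hd : 1 ≤ d)
    (f : EuclideanSpace ℝ (Fin d) → ℝ) (L : ℝ) (hL : 0 < L)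
    (hf : ContDiff ℝ 1 f)
    (hlip : ∀ x y : EuclideanSpace ℝ (Fin d),
      ‖gradient f x - gradient f y‖ ≤ L * ‖x - y‖)
    (a b : Fin d → ℝ) (hab : ∀ i, a i < b i)
    (R : Set (EuclideanSpace ℝ (Fin d)))
    (hR : R = {x : EuclideanSpace ℝ (Fin d) | ∀ i, x i ∈ Set.Icc (a i) (b i)})
    (x : EuclideanSpace ℝ (Fin d)) (hx : x ∈ R)
    (ε : ℝ) (hε : 0 < ε)
    (hunreach : ∀ y ∈ frontier R, f y > f x - (ε / 2) * ‖x - y‖)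
    (hside : ∀ i, b i - a i ≤ ε / (2 * Real.sqrt d * L)) :
    ‖gradient f x‖ ≤ ε := by
  by_contra hcon
  push_neg at hcon
  set g := gradient f x with hg
  have hgpos : (0:ℝ) < ‖g‖ := lt_trans hε hcon
  have hgne : ‖g‖ ≠ 0 := ne_of_gt hgpos
  set u : EuclideanSpace ℝ (Fin d) := ‖g‖⁻¹ • g with hu
  have hnu : ‖u‖ = 1 := by
    rw [hu, norm_smul, norm_inv, norm_norm, inv_mul_cancel₀ hgne]
  set φ : ℝ → EuclideanSpace ℝ (Fin d) := fun t => x - t • u with hφ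
  have hφc : Continuous φ := by fun_prop
  have hRclosed : IsClosed R := by
    rw [hR]
    have : {x : EuclideanSpace ℝ (Fin d) | ∀ i, x i ∈ Set.Icc (a i) (b i)}
        = ⋂ i, (EuclideanSpace.proj i : EuclideanSpace ℝ (Fin d) →L[ℝ] ℝ) ⁻¹'
            Set.Icc (a i) (b i) := by
      ext z; simp [Set.mem_iInter]
    rw [this]
    exact isClosed_iInter fun i =>
      IsClosed.preimage (EuclideanSpace.proj i).continuous isClosed_Icc
  have hdpos : (0:ℝ) < Real.sqrt d := Real.sqrt_pos.2 (by exact_mod_cast hd)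
  -- distance bound within R
  have hdist : ∀ z ∈ R, ‖z - x‖ ≤ ε / (2 * L) := by
    intro z hz
    rw [hR] at hz hx
    have hbound : ∀ i, ‖(z - x : EuclideanSpace ℝ (Fin d)) i‖ ≤ ε / (2 * Real.sqrt d * L) := by
      intro i
      have h1 := hz i
      have h2 := hx i
      have : |z i - x i| ≤ b i - a i := by
        rw [abs_sub_le_iff]
        constructor <;> [linarith [h1.1, h1.2, h2.1, h2.2]; linarith [h1.1, h1.2, h2.1, h2.2]]
      have h3 : (z - x : EuclideanSpace ℝ (Fin d)) i = z i - x i := by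
        simp [PiLp.sub_apply]
      rw [h3, Real.norm_eq_abs]
      exact le_trans this (hside i)
    have hnorm : ‖(z - x : EuclideanSpace ℝ (Fin d))‖
        ≤ Real.sqrt (d * (ε / (2 * Real.sqrt d * L))^2) := by
      rw [EuclideanSpace.norm_eq]
      apply Real.sqrt_le_sqrt
      calc ∑ i, ‖(z - x : EuclideanSpace ℝ (Fin d)) i‖ ^ 2
          ≤ ∑ _i : Fin d, (ε / (2 * Real.sqrt d * L))^2 := by
            apply Finset.sum_le_sum
            intro i _
            exact pow_le_pow_left₀ (norm_nonneg _) (hbound i) 2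
        _ = d * (ε / (2 * Real.sqrt d * L))^2 := by
            rw [Finset.sum_const, Finset.card_univ, Fintype.card_fin, nsmul_eq_mul]
    have heq : Real.sqrt (d * (ε / (2 * Real.sqrt d * L))^2) = ε / (2 * L) := by
      rw [Real.sqrt_mul (by positivity), Real.sqrt_sq (by positivity)]
      have hds : Real.sqrt d * Real.sqrt d = d := Real.mul_self_sqrt (by positivity)
      field_simp
    rw [heq] at hnorm
    exact hnorm
  have hnormφ : ∀ t : ℝ, 0 ≤ t → ‖φ t - x‖ = t := by
    intro t ht
    have : φ t - x = -(t • u) := by rw [hφ]; simp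
    rw [this, norm_neg, norm_smul, hnu, Real.norm_eq_abs, abs_of_nonneg ht, mul_one]
  set S : Set ℝ := {t | 0 ≤ t ∧ φ t ∈ R} with hSdef
  have hS0 : (0:ℝ) ∈ S := by
    constructor
    · rfl
    · show φ 0 ∈ R
      have : φ 0 = x := by simp [hφ]
      rw [this]; exact hx
  have hSbdd : BddAbove S := by
    refine ⟨ε / (2 * L), fun t ht => ?_⟩
    have := hdist (φ t) ht.2
    rwa [hnormφ t ht.1] at this
  have hSclosed : IsClosed S := by
    have : S = Set.Ici (0:ℝ) ∩ φ ⁻¹' R := by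
      ext t; simp [hSdef, Set.mem_Ici, and_comm]
    rw [this]
    exact isClosed_Ici.inter (hRclosed.preimage hφc)
  set T := sSup S with hT
  have hTS : T ∈ S := hSclosed.csSup_mem ⟨0, hS0⟩ hSbdd
  have hT0 : 0 ≤ T := hTS.1
  set y := φ T with hy
  have hyR : y ∈ R := hTS.2
  have hTle : T ≤ ε / (2 * L) := by
    have := hdist y hyR
    rwa [hnormφ T hT0] at this
  have hynotint : y ∉ interior R := by
    intro hint
    have hopen : IsOpen (φ ⁻¹' interior R) := isOpen_interior.preimage hφc
    rcases Metric.isOpen_iff.1 hopen T hint with ⟨δ, hδ, hball⟩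
    have hmem : T + δ/2 ∈ S := by
      constructor
      · linarith
      · have : T + δ/2 ∈ Metric.ball T δ := by
          rw [Metric.mem_ball, Real.dist_eq, add_sub_cancel_left,
            abs_of_pos (by linarith)]
          linarith
        exact interior_subset (hball this)
    have := le_csSup hSbdd hmem
    linarith
  have hyfront : y ∈ frontier R := by
    rw [hRclosed.frontier_eq]
    exact ⟨hyR, hynotint⟩
  have hxyT : ‖x - y‖ = T := by
    rw [norm_sub_rev]; exact hnormφ T hT0
  have hTpos : 0 < T := by
    rcases lt_or_eq_of_le hT0 with h | h
    · exact h
    · exfalso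
      have := hunreach y hyfront
      rw [hxyT, ← h] at this
      have hyx : y = x := by rw [hy, hφ]; simp [← h]
      rw [hyx] at this
      linarith
  -- descent lemma via mean value inequality on the segment
  have hdiff : Differentiable ℝ f := hf.differentiable one_ne_zero
  have htd : ∀ z : EuclideanSpace ℝ (Fin d),
      fderiv ℝ f z = (toDual ℝ (EuclideanSpace ℝ (Fin d))) (gradient f z) := by
    intro z
    rw [gradient, LinearIsometryEquiv.apply_symm_apply]
  have hseg : Convex ℝ (segment ℝ x y) := convex_segment x y
  have hbound : ∀ z ∈ segment ℝ x y,
      ‖fderiv ℝ f z - (toDual ℝ (EuclideanSpace ℝ (Fin d))) g‖ ≤ L * ‖y - x‖ := by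
    intro z hz
    rw [htd z, ← LinearIsometryEquiv.map_sub, LinearIsometryEquiv.norm_map]
    calc ‖gradient f z - g‖ ≤ L * ‖z - x‖ := hlip z x
      _ ≤ L * ‖y - x‖ := by
          apply mul_le_mul_of_nonneg_left _ hL.le
          rcases hz with ⟨s, t, hs, ht, hst, rfl⟩
          have : s • x + t • y - x = t • (y - x) := by
            rw [smul_sub]
            have : s = 1 - t := by linarith
            rw [this]
            module
          rw [this, norm_smul, Real.norm_eq_abs, abs_of_nonneg ht]
          nlinarith [norm_nonneg (y - x)]
  have hmvt := Convex.norm_image_sub_le_of_norm_hasFDerivWithin_le'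
    (f := f) (s := segment ℝ x y)
    (f' := fun z => fderiv ℝ f z)
    (φ := (toDual ℝ (EuclideanSpace ℝ (Fin d))) g)
    (C := L * ‖y - x‖)
    (fun z _ => (hdiff z).hasFDerivAt.hasFDerivWithinAt)
    hbound hseg (left_mem_segment ℝ x y) (right_mem_segment ℝ x y)
  have hyx : y - x = -(T • u) := by rw [hy, hφ]; simp
  have hinner : (toDual ℝ (EuclideanSpace ℝ (Fin d))) g (y - x) = -(T * ‖g‖) := by
    rw [toDual_apply_apply, hyx, inner_neg_right, real_inner_smul_right, hu,
      real_inner_smul_right, real_inner_self_eq_norm_sq]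
    field_simp
  have hnyx : ‖y - x‖ = T := by rw [norm_sub_rev] at hxyT; exact hxyT
  rw [hinner, hnyx] at hmvt
  have hupper : f y ≤ f x - T * ‖g‖ + L * T * T := by
    have := abs_le.1 (by rwa [Real.norm_eq_abs] at hmvt)
    linarith [this.2]
  have hlow := hunreach y hyfront
  rw [hxyT] at hlow
  -- combine
  have h1 : L * T * T ≤ (ε / 2) * T := by
    have : L * T ≤ ε / 2 := by
      have := mul_le_mul_of_nonneg_left hTle hL.le
      calc L * T ≤ L * (ε / (2 * L)) := this
        _ = ε / 2 := by field_simp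
    exact mul_le_mul_of_nonneg_right this hT0
  have h2 : T * ε < T * ‖g‖ := by
    apply mul_lt_mul_of_pos_left hcon hTpos
  have h4 : (ε/2) * T + (ε/2) * T = T * ε := by ring
  linarith
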